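/- Let q be a root of unity such that q^ℓ has order N, and let t = (t_{kj}) be parameters such that one cannot choose nonnegative integers p_{kj} with ∑_j p_{kj} = p < ℓN for all k and ∏_{k,j} u_{kj}^{p_{kj}} = q^p (where u_{kj} = e^{2πij/d_k} t_{kj}). Then any finite-dimensional representation of the algebra H(t,q) has dimension ≥ ℓN. -/

import Mathlib

open Polynomial Matrix

/-- Lift a multiset whose elements are all in the range of `f`. -/
lemma multiset_lift {α ι : Type*} (f : ι → α) (s : Multiset α)
    (h : ∀ x ∈ s, ∃ j, f j = x) : ∃ t : Multiset ι, t.map f = s := by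
  induction s using Multiset.induction_on with
  | empty => exact ⟨0, rfl⟩
  | cons a s ih =>
    obtain ⟨t, ht⟩ := ih (fun x hx => h x (Multiset.mem_cons_of_mem hx))
    obtain ⟨j, hj⟩ := h a (Multiset.mem_cons_self a s)
    exact ⟨j ::ₘ t, by simp [ht, hj]⟩

lemma count_sum_card {ι : Type*} [Fintype ι] [DecidableEq ι] (t : Multiset ι) :
    ∑ j, t.count j = Multiset.card t := by
  rw [← Multiset.toFinset_sum_count_eq t]
  symm
  apply Finset.sum_subset (Finset.subset_univ _)
  intro x _ hx
  simpa [Multiset.count_eq_zero] using hx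

lemma prod_pow_count {α ι : Type*} [CommMonoid α] [Fintype ι] [DecidableEq ι]
    (f : ι → α) (t : Multiset ι) :
    ∏ j, f j ^ t.count j = (t.map f).prod := by
  rw [Finset.prod_multiset_map_count]
  exact (Finset.prod_subset (Finset.subset_univ _) (fun x _ hx => by
    simp [Multiset.count_eq_zero.2 (by simpa using hx)])).symm

lemma eval_charpoly' {n : ℕ} (M : Matrix (Fin n) (Fin n) ℂ) (μ : ℂ) :
    M.charpoly.eval μ = (μ • (1 : Matrix (Fin n) (Fin n) ℂ) - M).det := by
  rw [Matrix.charpoly, ← Polynomial.coe_evalRingHom, RingHom.map_det]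
  congr 1
  ext i j
  by_cases h : i = j <;>
    simp [RingHom.mapMatrix_apply, charmatrix_apply, Matrix.diagonal_apply,
      Matrix.one_apply, h, mul_comm]

lemma prod_factors_mulVec {n p : ℕ} (c : Fin n → ℂ) (M : Matrix (Fin p) (Fin p) ℂ)
    (v : Fin p → ℂ) (μ : ℂ) (hv : M.mulVec v = μ • v) :
    ((List.ofFn fun j => M - c j • (1 : Matrix (Fin p) (Fin p) ℂ)).prod).mulVec v
      = (∏ j, (μ - c j)) • v := by
  induction n with
  | zero => simp [List.ofFn_zero, Matrix.one_mulVec]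
  | succ n ih =>
    rw [List.ofFn_succ, List.prod_cons, ← Matrix.mulVec_mulVec,
      ih (fun j => c j.succ), Fin.prod_univ_succ]
    rw [Matrix.mulVec_smul, Matrix.sub_mulVec, hv, Matrix.smul_mulVec,
      Matrix.one_mulVec]
    rw [← sub_smul, smul_smul, mul_comm]

/-- let `q` be a root of unity such that `q^l` has order `N`, and let the
parameters `u_{kj}` be such that one cannot choose nonnegative integers `p_{kj}` with
`∑_j p_{kj} = p < lN` for all `k` and `∏ u_{kj}^{p_{kj}} = q^p`.  Then every nonzero
finite-dimensional representation of `H(t,q)` — i.e. every tuple of `p × p` matrices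
`T_k` with `∏_j (T_k - u_{kj}) = 0` and `T₁⋯T_m = q` — has dimension `p ≥ lN`. -/
theorem stmt13 (l N m : ℕ) (hl : 0 < l) (hN : 0 < N) (q : ℂ)
    (hqN : (q ^ l) ^ N = 1) (hord : ∀ k : ℕ, 0 < k → k < N → (q ^ l) ^ k ≠ 1)
    (d : Fin m → ℕ) (u : (k : Fin m) → Fin (d k) → ℂ)
    (hgen : ∀ p : ℕ, 0 < p → p < l * N →
      ∀ P : (k : Fin m) → Fin (d k) → ℕ, (∀ k, ∑ j, P k j = p) →
        ∏ k, ∏ j, u k j ^ P k j ≠ q ^ p)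
    (p : ℕ) (hp : 0 < p) (T : Fin m → Matrix (Fin p) (Fin p) ℂ)
    (hTk : ∀ k, (List.ofFn fun j : Fin (d k) =>
      T k - u k j • (1 : Matrix (Fin p) (Fin p) ℂ)).prod = 0)
    (hprod : (List.ofFn T).prod = q • (1 : Matrix (Fin p) (Fin p) ℂ)) :
    l * N ≤ p := by
  by_contra hlt
  push_neg at hlt
  -- every root of the charpoly of `T k` is one of the `u k j`
  have hroot : ∀ k : Fin m, ∀ μ ∈ (T k).charpoly.roots, ∃ j, u k j = μ := by
    intro k μ hμ
    have hev : (T k).charpoly.eval μ = 0 :=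
      (Polynomial.mem_roots ((T k).charpoly_monic.ne_zero)).mp hμ
    rw [eval_charpoly'] at hev
    have hdet : (T k - μ • (1 : Matrix (Fin p) (Fin p) ℂ)).det = 0 := by
      have hneg : T k - μ • (1 : Matrix (Fin p) (Fin p) ℂ)
          = -(μ • (1 : Matrix (Fin p) (Fin p) ℂ) - T k) := (neg_sub _ _).symm
      rw [hneg, Matrix.det_neg, hev, mul_zero]
    obtain ⟨v, hv0, hv⟩ := (Matrix.exists_mulVec_eq_zero_iff).mpr hdet
    have heig : (T k).mulVec v = μ • v := by
      have := hv
      rw [Matrix.sub_mulVec, Matrix.smul_mulVec, Matrix.one_mulVec,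
        sub_eq_zero] at this
      exact this
    have := prod_factors_mulVec (u k) (T k) v μ heig
    rw [hTk k] at this
    have h0 : (∏ j, (μ - u k j)) • v = 0 := by simpa using this.symm
    have : ∏ j, (μ - u k j) = 0 := by
      by_contra hne
      exact hv0 (by simpa [hne] using smul_eq_zero.mp h0)
    obtain ⟨j, _, hj⟩ := Finset.prod_eq_zero_iff.mp this
    exact ⟨j, (sub_eq_zero.mp hj).symm⟩
  -- lift the roots multiset to indices
  have hlift : ∀ k : Fin m, ∃ t : Multiset (Fin (d k)),
      t.map (u k) = (T k).charpoly.roots := fun k =>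
    multiset_lift (u k) _ (hroot k)
  choose t ht using hlift
  -- cardinality of roots is p
  have hcard : ∀ k, Multiset.card (t k) = p := by
    intro k
    have h1 : Multiset.card ((T k).charpoly.roots) = (T k).charpoly.natDegree :=
      (Polynomial.splits_iff_card_roots.mp (IsAlgClosed.splits _))
    have h2 : (T k).charpoly.natDegree = p := by
      simp [Matrix.charpoly_natDegree_eq_dim]
    have := congrArg Multiset.card (ht k)
    simpa [h1, h2] using this
  classical
  set P : (k : Fin m) → Fin (d k) → ℕ := fun k j => (t k).count j with hP
  have hsum : ∀ k, ∑ j, P k j = p := fun k => by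
    rw [hP]; simp only; rw [count_sum_card]; exact hcard k
  have hdetk : ∀ k, (T k).det = ∏ j, u k j ^ P k j := by
    intro k
    rw [Matrix.det_eq_prod_roots_charpoly, ← ht k, prod_pow_count]
  -- determinant of the product relation
  have hdet : ∏ k, (T k).det = q ^ p := by
    have h1 : ((List.ofFn T).prod).det = ((List.ofFn T).map Matrix.det).prod :=
      (List.prod_hom (List.ofFn T) Matrix.detMonoidHom).symm
    rw [hprod] at h1
    have h2 : (q • (1 : Matrix (Fin p) (Fin p) ℂ)).det = q ^ p := by
      simp [Matrix.det_smul]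
    rw [h2] at h1
    rw [← List.prod_ofFn]
    simpa [List.map_ofFn, Function.comp_def] using h1.symm
  exact hgen p hp hlt P hsum (by rw [← hdet]; exact Finset.prod_congr rfl fun k _ => (hdetk k).symm)
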